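/- The polynomial 1 + x^2 + x^3 + x^5 cannot appear as a factor in any factorization ∏_{i=1}^m d_i(x) = ∑_{s=0}^{t} x^s where each d_i has coefficients in {0,1} and constant coefficient 1. -/
import Mathlib

open Polynomial Finset

lemma coeff_prod_nonneg' {ι : Type*} (s : Finset ι) (d : ι → ℝ[X])
    (h : ∀ i ∈ s, ∀ k, 0 ≤ (d i).coeff k) :
    ∀ k, 0 ≤ (∏ i ∈ s, d i).coeff k := by
  refine Finset.prod_induction d (fun p => ∀ k, 0 ≤ p.coeff k) ?_ ?_ h
  · intro p q hp hq k
    rw [Polynomial.coeff_mul]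
    exact Finset.sum_nonneg fun x _ => mul_nonneg (hp _) (hq _)
  · intro k
    rw [Polynomial.coeff_one]
    positivity

theorem d2_not_in_fair_sack (m t : ℕ) (d : Fin m → ℝ[X])
    (hcoeff : ∀ i k, (d i).coeff k = 0 ∨ (d i).coeff k = 1)
    (h0 : ∀ i, (d i).coeff 0 = 1)
    (hprod : ∏ i, d i = ∑ s ∈ Finset.range (t + 1), (X : ℝ[X]) ^ s) :
    ∀ i, d i ≠ 1 + X ^ 2 + X ^ 3 + X ^ 5 := by
  intro i0 hi0
  set q : ℝ[X] := 1 + X ^ 2 + X ^ 3 + X ^ 5 with hq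
  set R : ℝ[X] := ∏ i ∈ Finset.univ.erase i0, d i with hR
  have hsplit : ∏ i, d i = q * R := by
    rw [hR, ← hi0, Finset.mul_prod_erase _ _ (Finset.mem_univ i0)]
  -- coefficients of q
  have hq0 : q.coeff 0 = 1 := by simp [hq]
  have hq1 : q.coeff 1 = 0 := by
    simp [hq, coeff_X_pow, coeff_one]
  have hq2 : q.coeff 2 = 1 := by
    simp [hq, coeff_X_pow, coeff_one]
  have hq3 : q.coeff 3 = 1 := by
    simp [hq, coeff_X_pow, coeff_one]
  -- R has nonneg coefficients
  have hRnn : ∀ k, 0 ≤ R.coeff k := by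
    apply coeff_prod_nonneg'
    intro i _ k
    rcases hcoeff i k with h | h <;> rw [h] <;> norm_num
  -- R.coeff 0 = 1
  have hR0 : R.coeff 0 = 1 := by
    have : Polynomial.constantCoeff R = 1 := by
      rw [hR, map_prod]
      exact Finset.prod_eq_one (fun i _ => h0 i)
    simpa using this
  -- coefficients of the RHS
  have hrhs : ∀ k, (∑ s ∈ Finset.range (t + 1), (X : ℝ[X]) ^ s).coeff k
      = if k ≤ t then 1 else 0 := by
    intro k
    rw [Polynomial.finset_sum_coeff]
    simp only [coeff_X_pow]
    rw [Finset.sum_ite_eq (Finset.range (t + 1)) k (fun _ => (1 : ℝ))]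
    simp [Nat.lt_succ_iff]
  -- product coefficients via q * R
  have hc1 : (q * R).coeff 1 = R.coeff 1 := by
    rw [Polynomial.coeff_mul, Finset.Nat.sum_antidiagonal_eq_sum_range_succ_mk]
    simp [Finset.sum_range_succ, hq0, hq1]
  have hc3 : (q * R).coeff 3 = R.coeff 3 + R.coeff 1 + 1 := by
    rw [Polynomial.coeff_mul, Finset.Nat.sum_antidiagonal_eq_sum_range_succ_mk]
    simp [Finset.sum_range_succ, hq0, hq1, hq2, hq3, hR0]
  rw [hsplit] at hprod
  have e1 : R.coeff 1 = if 1 ≤ t then (1:ℝ) else 0 := by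
    rw [← hc1, hprod, hrhs]
  have e3 : R.coeff 3 + R.coeff 1 + 1 = if 3 ≤ t then (1:ℝ) else 0 := by
    rw [← hc3, hprod, hrhs]
  by_cases ht : 3 ≤ t
  · rw [if_pos ht] at e3
    rw [if_pos (by omega)] at e1
    have := hRnn 3
    linarith
  · rw [if_neg ht] at e3
    have := hRnn 3
    have := hRnn 1
    linarith
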